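/- For all real x with 0 < x ≤ 2, ((1+x)^2/(e^2·x)) · (e^{x/(1+x)} - 1) · (1+x)^{2/x} ≤ 1 + 0.72·x. -/

import Mathlib

theorem subcase_1_1_second_bound (x : ℝ) (hx0 : 0 < x) (hx2 : x ≤ 2) :
    (1 + x) ^ 2 / (Real.exp 1 ^ 2 * x) * (Real.exp (x / (1 + x)) - 1)
      * (1 + x) ^ (2 / x) ≤ 1 + 0.72 * x := by
  have h1x : (0:ℝ) < 1 + x := by linarith
  have h1xne : (1:ℝ) + x ≠ 0 := ne_of_gt h1x
  have hxne : x ≠ 0 := ne_of_gt hx0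
  set u : ℝ := x / (1 + x) with hu
  have hu0 : 0 < u := div_pos hx0 h1x
  have hu1 : u ≤ 1 := le_of_lt ((div_lt_one h1x).2 (by linarith))
  -- Step 1: log bound  log(1+x) ≤ x(2+x)/(2(1+x))
  have hlog : Real.log (1 + x) ≤ x * (2 + x) / (2 * (1 + x)) := by
    have hlog0 : 0 ≤ Real.log (1 + x) :=
      Real.log_nonneg (by linarith : (1:ℝ) ≤ 1 + x)
    have hsinh : Real.sinh (Real.log (1 + x)) = ((1 + x) - (1 + x)⁻¹) / 2 :=
      Real.sinh_log h1x
    have hle : Real.log (1 + x) ≤ Real.sinh (Real.log (1 + x)) := by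
      rcases lt_or_eq_of_le hlog0 with h | h
      · exact le_of_lt (Real.self_lt_sinh_iff.2 h)
      · rw [← h]; simp
    have heq : ((1 + x) - (1 + x)⁻¹) / 2 = x * (2 + x) / (2 * (1 + x)) := by
      field_simp
      ring
    calc Real.log (1 + x) ≤ Real.sinh (Real.log (1 + x)) := hle
      _ = x * (2 + x) / (2 * (1 + x)) := by rw [hsinh, heq]
  -- Step 2: rpow bound
  have hrpow : (1 + x) ^ (2 / x) ≤ Real.exp 1 ^ 2 / Real.exp u := by
    have h1 : (1 + x) ^ (2 / x) = Real.exp (2 / x * Real.log (1 + x)) := by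
      rw [Real.rpow_def_of_pos h1x]; ring_nf
    have h2 : 2 / x * Real.log (1 + x) ≤ 2 - u := by
      have := mul_le_mul_of_nonneg_left hlog (le_of_lt (by positivity : (0:ℝ) < 2 / x))
      calc 2 / x * Real.log (1 + x) ≤ 2 / x * (x * (2 + x) / (2 * (1 + x))) := this
        _ = 2 - u := by rw [hu]; field_simp; ring
    have h3 : Real.exp (2 - u) = Real.exp 1 ^ 2 / Real.exp u := by
      rw [Real.exp_sub, sq, ← Real.exp_add]
      norm_num
    rw [h1, ← h3]
    exact Real.exp_le_exp.2 h2
  -- Step 3: exp upper bound  exp u - 1 ≤ u + u²/2 + (2/9)u³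
  have hexp_up : Real.exp u - 1 ≤ u + u ^ 2 / 2 + 2 / 9 * u ^ 3 := by
    have h := Real.exp_bound' (le_of_lt hu0) hu1 (n := 3) (by norm_num)
    have hsum : (∑ m ∈ Finset.range 3, u ^ m / m.factorial) = 1 + u + u ^ 2 / 2 := by
      norm_num [Finset.sum_range_succ, Nat.factorial]
    rw [hsum] at h
    norm_num [Nat.factorial] at h
    linarith
  -- Step 4: exp lower bound  1 + u + u²/2 + u³/6 ≤ exp u
  have hexp_lo : 1 + u + u ^ 2 / 2 + u ^ 3 / 6 ≤ Real.exp u := by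
    have h := Real.sum_le_exp_of_nonneg (le_of_lt hu0) 4
    have hsum : (∑ i ∈ Finset.range 4, u ^ i / i.factorial)
        = 1 + u + u ^ 2 / 2 + u ^ 3 / 6 := by
      norm_num [Finset.sum_range_succ, Nat.factorial]
    rw [hsum] at h
    exact h
  have hQ0 : (0:ℝ) < 1 + u + u ^ 2 / 2 + u ^ 3 / 6 := by positivity
  have hexpu0 : (0:ℝ) < Real.exp u := Real.exp_pos u
  have hexpune : Real.exp u ≠ 0 := ne_of_gt hexpu0
  have he1ne : Real.exp 1 ≠ 0 := ne_of_gt (Real.exp_pos 1)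
  have hA0 : (0:ℝ) ≤ (1 + x) ^ 2 / (Real.exp 1 ^ 2 * x) := by positivity
  have hB0 : (0:ℝ) ≤ Real.exp u - 1 := by
    have := Real.one_le_exp (le_of_lt hu0)
    linarith
  have hnum : (0:ℝ) ≤ u + u ^ 2 / 2 + 2 / 9 * u ^ 3 := by positivity
  have hS0 : (0:ℝ) < 6 * (1 + x) ^ 3 + 6 * x * (1 + x) ^ 2 + 3 * x ^ 2 * (1 + x) + x ^ 3 := by
    positivity
  calc (1 + x) ^ 2 / (Real.exp 1 ^ 2 * x) * (Real.exp u - 1) * (1 + x) ^ (2 / x)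
      ≤ (1 + x) ^ 2 / (Real.exp 1 ^ 2 * x) * (Real.exp u - 1)
        * (Real.exp 1 ^ 2 / Real.exp u) := by
        exact mul_le_mul_of_nonneg_left hrpow (mul_nonneg hA0 hB0)
    _ ≤ (1 + x) ^ 2 / (Real.exp 1 ^ 2 * x) * (u + u ^ 2 / 2 + 2 / 9 * u ^ 3)
        * (Real.exp 1 ^ 2 / Real.exp u) := by
        have h0 : (0:ℝ) ≤ Real.exp 1 ^ 2 / Real.exp u := by positivity
        exact mul_le_mul_of_nonneg_right
          (mul_le_mul_of_nonneg_left hexp_up hA0) h0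
    _ = (1 + x) ^ 2 / x * ((u + u ^ 2 / 2 + 2 / 9 * u ^ 3) / Real.exp u) := by
        field_simp
    _ ≤ (1 + x) ^ 2 / x * ((u + u ^ 2 / 2 + 2 / 9 * u ^ 3)
        / (1 + u + u ^ 2 / 2 + u ^ 3 / 6)) := by
        exact mul_le_mul_of_nonneg_left
          (div_le_div_of_nonneg_left hnum hQ0 hexp_lo) (by positivity)
    _ = 6 * (1 + x) ^ 2 * ((1 + x) ^ 2 + x * (1 + x) / 2 + 2 / 9 * x ^ 2)
        / (6 * (1 + x) ^ 3 + 6 * x * (1 + x) ^ 2 + 3 * x ^ 2 * (1 + x) + x ^ 3) := by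
        rw [hu]
        have hPne : 6 * (1 + x) ^ 3 + 6 * x * (1 + x) ^ 2 + 3 * x ^ 2 * (1 + x) + x ^ 3
            ≠ 0 := ne_of_gt hS0
        have hQne : 1 + x / (1 + x) + (x / (1 + x)) ^ 2 / 2 + (x / (1 + x)) ^ 3 / 6
            ≠ 0 := by positivity
        field_simp
        ring
    _ ≤ 1 + 0.72 * x := by
        rw [div_le_iff₀ hS0]
        nlinarith [pow_pos hx0 2, pow_pos hx0 3, pow_pos hx0 4, hx0.le]
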